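/- Let O be a finite outcome set of size N and let f: O → ℝ be a score function with minimizer S₁ and sorted values f(S₁) ≤ f(S₂) ≤ ... ≤ f(S_N). Fix ε, Δ > 0. For an integer R with 2 ≤ R ≤ N, define P_R(S₁) = 1 / (1 + ∑_{i=2}^{R} exp(−ε(f(S_i)−f(S₁))/(2Δ)) + (N − R)·exp(−ε(f(S_R)−f(S₁))/(2Δ))). Then P_R(S₁) is non-decreasing in R: if R₁ < R₂ then P_{R₁}(S₁) ≤ P_{R₂}(S₁). -/

import Mathlib

/-- In the truncated exponential mechanism (top-`R` method), the probability of selecting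
the best outcome is non-decreasing in `R`.  Here `f i` is the `i`-th smallest score
(`1`-based indexing) and
`P R = 1/(1 + ∑_{i=2}^R exp(−ε(f i − f 1)/(2Δ)) + (N−R)·exp(−ε(f R − f 1)/(2Δ)))`. -/
theorem stmt4 (N : ℕ) (f : ℕ → ℝ) (ε Δ : ℝ) (hε : 0 < ε) (hΔ : 0 < Δ)
    (hmono : ∀ i j, 1 ≤ i → i ≤ j → j ≤ N → f i ≤ f j)
    (R₁ R₂ : ℕ) (h2 : 2 ≤ R₁) (h12 : R₁ < R₂) (hN : R₂ ≤ N)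
    (P : ℕ → ℝ)
    (hP : ∀ R, P R = 1 / (1 + (∑ i ∈ Finset.Icc 2 R,
        Real.exp (-(ε * (f i - f 1)) / (2 * Δ)))
      + ((N : ℝ) - R) * Real.exp (-(ε * (f R - f 1)) / (2 * Δ)))) :
    P R₁ ≤ P R₂ := by
  set e : ℕ → ℝ := fun i => Real.exp (-(ε * (f i - f 1)) / (2 * Δ)) with he
  have h1R₁ : 1 ≤ R₁ := le_trans one_le_two h2
  have hepos : ∀ i, 0 < e i := fun i => Real.exp_pos _
  have h2Δ : (0:ℝ) < 2 * Δ := by linarith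
  have hemono : ∀ i j, 1 ≤ i → i ≤ j → j ≤ N → e j ≤ e i := by
    intro i j hi hij hj
    have hf : f i ≤ f j := hmono i j hi hij hj
    apply Real.exp_le_exp.2
    apply div_le_div_of_nonneg_right ?_ h2Δ.le |>.trans_eq rfl
    nlinarith
  -- split the sum for R₂
  have hsplit : ∀ R, Finset.Icc 2 R = Finset.Ioc 1 R := fun R => Finset.Icc_add_one_left_eq_Ioc 1 R
  have hsum : (∑ i ∈ Finset.Ioc 1 R₁, e i) + ∑ i ∈ Finset.Ioc R₁ R₂, e i
      = ∑ i ∈ Finset.Ioc 1 R₂, e i :=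
    Finset.sum_Ioc_consecutive _ h1R₁ h12.le
  have htail : ∑ i ∈ Finset.Ioc R₁ R₂, e i ≤ ((R₂:ℝ) - R₁) * e R₁ := by
    have := Finset.sum_le_card_nsmul (Finset.Ioc R₁ R₂) e (e R₁) ?_
    · rwa [Nat.card_Ioc, nsmul_eq_mul, Nat.cast_sub h12.le] at this
    · intro i hi
      rw [Finset.mem_Ioc] at hi
      exact hemono R₁ i h1R₁ hi.1.le (hi.2.trans hN)
  have heR : e R₂ ≤ e R₁ := hemono R₁ R₂ h1R₁ h12.le hN
  have hNR₂ : (0:ℝ) ≤ (N:ℝ) - R₂ := by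
    have := hN; exact sub_nonneg.2 (by exact_mod_cast this)
  -- denominators
  have hden : (1 + (∑ i ∈ Finset.Icc 2 R₂, e i) + ((N:ℝ) - R₂) * e R₂)
      ≤ (1 + (∑ i ∈ Finset.Icc 2 R₁, e i) + ((N:ℝ) - R₁) * e R₁) := by
    rw [hsplit R₁, hsplit R₂, ← hsum]
    nlinarith [hepos R₁, hepos R₂]
  have hpos : (0:ℝ) < 1 + (∑ i ∈ Finset.Icc 2 R₂, e i) + ((N:ℝ) - R₂) * e R₂ := by
    have hs : (0:ℝ) ≤ ∑ i ∈ Finset.Icc 2 R₂, e i :=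
      Finset.sum_nonneg fun i _ => (hepos i).le
    nlinarith [hepos R₂]
  rw [hP R₁, hP R₂]
  exact one_div_le_one_div_of_le hpos hden
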